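/- Let φ_1,…,φ_{k-1} ∈ ℝ^d with ‖φ_τ‖_2 ≤ 1, Λ = I + Σ_{τ=1}^{k-1} φ_τ φ_τ^⊤, and let v_1,…,v_{k-1} ∈ ℝ with |v_τ| ≤ H for all τ. Then the vector w = Λ^{-1} Σ_{τ=1}^{k-1} φ_τ v_τ satisfies ‖w‖_2 ≤ H√(kd). -/

import Mathlib

open Matrix Finset

lemma dot_vecMulVec_mulVec {d : ℕ} (x u y : Fin d → ℝ) :
    x ⬝ᵥ ((vecMulVec u u) *ᵥ y) = (x ⬝ᵥ u) * (u ⬝ᵥ y) := by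
  simp only [dotProduct, mulVec, vecMulVec_apply, Finset.mul_sum, Finset.sum_mul]
  rw [Finset.sum_comm]
  exact Finset.sum_congr rfl fun i _ => Finset.sum_congr rfl fun j _ => by ring

lemma ridge_posdef {d k : ℕ} (φ : Fin (k - 1) → Fin d → ℝ) :
    (1 + ∑ τ, vecMulVec (φ τ) (φ τ) : Matrix (Fin d) (Fin d) ℝ).PosDef := by
  refine Matrix.PosDef.add_posSemidef Matrix.PosDef.one ?_
  refine Finset.sum_induction _ _ (fun a b ha hb => ha.add hb) Matrix.PosSemidef.zero ?_
  intro τ _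
  rw [Matrix.posSemidef_iff_dotProduct_mulVec]
  constructor
  · ext i j
    simp [Matrix.conjTranspose, vecMulVec_apply, mul_comm]
  · intro x
    have : star x ⬝ᵥ (vecMulVec (φ τ) (φ τ) *ᵥ x) = (φ τ ⬝ᵥ x) ^ 2 := by
      have hs : star x = x := rfl
      rw [hs, dot_vecMulVec_mulVec, dotProduct_comm, sq]
    rw [this]
    positivity


lemma sum_mulVec' {d m : ℕ} (M : Fin m → Matrix (Fin d) (Fin d) ℝ) (x : Fin d → ℝ) :
    (∑ τ, M τ) *ᵥ x = ∑ τ, M τ *ᵥ x := by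
  ext i
  simp only [Matrix.mulVec, dotProduct, Finset.sum_apply, Matrix.sum_apply, Finset.sum_mul]
  rw [Finset.sum_comm]

lemma dot_sum' {d m : ℕ} (x : Fin d → ℝ) (f : Fin m → Fin d → ℝ) :
    x ⬝ᵥ (∑ τ, f τ) = ∑ τ, x ⬝ᵥ f τ := by
  simp only [dotProduct, Finset.sum_apply, Finset.mul_sum]
  rw [Finset.sum_comm]

/-- Bounded weight of the ridge-regression solution. -/
theorem ridge_weight_bound {d k : ℕ} (H : ℝ) (hH : 0 ≤ H)
    (φ : Fin (k - 1) → Fin d → ℝ) (hφ : ∀ τ, Real.sqrt (φ τ ⬝ᵥ φ τ) ≤ 1)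
    (v : Fin (k - 1) → ℝ) (hv : ∀ τ, |v τ| ≤ H)
    (Λ : Matrix (Fin d) (Fin d) ℝ)
    (hΛ : Λ = 1 + ∑ τ, vecMulVec (φ τ) (φ τ))
    (w : Fin d → ℝ) (hw : w = Λ⁻¹.mulVec (∑ τ, v τ • φ τ)) :
    Real.sqrt (w ⬝ᵥ w) ≤ H * Real.sqrt (k * d) := by
  rcases Nat.eq_zero_or_pos d with hd | hd
  · subst hd
    have hzero : w ⬝ᵥ w = 0 := by simp [dotProduct]
    rw [hzero, Real.sqrt_zero]
    positivity
  -- positive definiteness of Λ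
  have hpd : Λ.PosDef := hΛ ▸ ridge_posdef φ
  set u : Fin d → ℝ := ∑ τ, v τ • φ τ with hu
  have hmul : Λ *ᵥ w = u := by
    rw [hw, Matrix.mulVec_mulVec, Matrix.mul_nonsing_inv _
      ((Matrix.isUnit_iff_isUnit_det _).1 hpd.isUnit), Matrix.one_mulVec]
  set a : Fin (k - 1) → ℝ := fun τ => φ τ ⬝ᵥ w with ha
  have h1 : w ⬝ᵥ (Λ *ᵥ w) = w ⬝ᵥ w + ∑ τ, (a τ) ^ 2 := by
    rw [hΛ, Matrix.add_mulVec, Matrix.one_mulVec, dotProduct_add]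
    congr 1
    rw [sum_mulVec', dot_sum']
    exact Finset.sum_congr rfl fun τ _ => by
      rw [dot_vecMulVec_mulVec, dotProduct_comm, sq]
  have h2 : w ⬝ᵥ u = ∑ τ, v τ * a τ := by
    rw [hu, dot_sum']
    exact Finset.sum_congr rfl fun τ _ => by
      rw [dotProduct_smul, smul_eq_mul, dotProduct_comm]
  set S : ℝ := w ⬝ᵥ w + ∑ τ, (a τ) ^ 2 with hSdef
  have hww : 0 ≤ w ⬝ᵥ w :=
    Finset.sum_nonneg fun i _ => mul_self_nonneg (w i)
  have hA : 0 ≤ ∑ τ, (a τ) ^ 2 := by positivity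
  have hS0 : 0 ≤ S := add_nonneg hww hA
  have hSeq : S = ∑ τ, v τ * a τ := by rw [← h1, hmul, h2]
  -- Cauchy–Schwarz
  have hT : (∑ τ, |a τ|) ^ 2 ≤ (k - 1 : ℕ) * ∑ τ, (a τ) ^ 2 := by
    have := Finset.sum_mul_sq_le_sq_mul_sq Finset.univ (fun _ : Fin (k-1) => (1 : ℝ))
      (fun τ => |a τ|)
    simpa [sq_abs] using this
  have hSle : S ≤ H * Real.sqrt ((k - 1 : ℕ) * S) := by
    calc S = ∑ τ, v τ * a τ := hSeq
      _ ≤ ∑ τ, H * |a τ| := Finset.sum_le_sum fun τ _ => by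
          calc v τ * a τ ≤ |v τ * a τ| := le_abs_self _
            _ = |v τ| * |a τ| := abs_mul _ _
            _ ≤ H * |a τ| := by
                have := abs_nonneg (a τ); exact mul_le_mul_of_nonneg_right (hv τ) this
      _ = H * ∑ τ, |a τ| := by rw [Finset.mul_sum]
      _ ≤ H * Real.sqrt ((k - 1 : ℕ) * ∑ τ, (a τ) ^ 2) := by
          exact mul_le_mul_of_nonneg_left (Real.le_sqrt_of_sq_le hT) hH
      _ ≤ H * Real.sqrt ((k - 1 : ℕ) * S) := by
          refine mul_le_mul_of_nonneg_left (Real.sqrt_le_sqrt ?_) hH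
          have : (∑ τ, (a τ) ^ 2) ≤ S := by rw [hSdef]; linarith
          exact mul_le_mul_of_nonneg_left this (by positivity)
  -- conclude S ≤ H^2 * (k-1)
  have hSbound : S ≤ H ^ 2 * (k - 1 : ℕ) := by
    rcases eq_or_lt_of_le hS0 with h0 | h0
    · rw [← h0]; positivity
    · have hsq : S ^ 2 ≤ (H * Real.sqrt ((k - 1 : ℕ) * S)) ^ 2 := by
        exact pow_le_pow_left₀ hS0 hSle 2
      rw [mul_pow, Real.sq_sqrt (by positivity)] at hsq
      nlinarith
  have hfinal : w ⬝ᵥ w ≤ H ^ 2 * ((k : ℝ) * d) := by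
    have h1 : w ⬝ᵥ w ≤ S := by rw [hSdef]; linarith
    have h2 : ((k - 1 : ℕ) : ℝ) ≤ (k : ℝ) * d := by
      have : ((k - 1 : ℕ) : ℝ) ≤ (k : ℝ) := by exact_mod_cast Nat.sub_le k 1
      have hkd : (k : ℝ) ≤ (k : ℝ) * d := by
        have hd1 : (1:ℝ) ≤ (d:ℝ) := by exact_mod_cast hd
        nlinarith [Nat.cast_nonneg (α := ℝ) k]
      linarith
    nlinarith [sq_nonneg H]
  calc Real.sqrt (w ⬝ᵥ w) ≤ Real.sqrt (H ^ 2 * ((k : ℝ) * d)) := Real.sqrt_le_sqrt hfinal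
    _ = H * Real.sqrt ((k : ℝ) * d) := by
        rw [Real.sqrt_mul (by positivity), Real.sqrt_sq hH]
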